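/- Suppose F_i and F_j are conditionally independent given Y, FNR(F_i) + FPR(F_i) < 1, and FNR(F_j) + FPR(F_j) < 1. Then Sgn(Δ(F_i,F_j)) is the 2×2 identity matrix: Δ(F_i,F_j)(1,1) > 0, Δ(F_i,F_j)(2,2) > 0, Δ(F_i,F_j)(1,2) < 0, and Δ(F_i,F_j)(2,1) < 0. -/

import Mathlib

open MeasureTheory

/-- Probability of an event, as a real number. -/
noncomputable def pr {Ω : Type*} [MeasurableSpace Ω] (μ : Measure Ω) (s : Set Ω) : ℝ :=
  (μ s).toReal

/-- A `{1,2}`-valued random label. -/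
def IsBinaryLabel {Ω : Type*} (F : Ω → ℕ) : Prop :=
  ∀ ω, F ω = 1 ∨ F ω = 2

/-- False negative rate: `FNR(F) = ℙ(F=2 ∣ Y=1)`. -/
noncomputable def fnr {Ω : Type*} [MeasurableSpace Ω] (μ : Measure Ω) (F Y : Ω → ℕ) : ℝ :=
  pr μ {ω | F ω = 2 ∧ Y ω = 1} / pr μ {ω | Y ω = 1}

/-- False positive rate: `FPR(F) = ℙ(F=1 ∣ Y=2)`. -/
noncomputable def fpr {Ω : Type*} [MeasurableSpace Ω] (μ : Measure Ω) (F Y : Ω → ℕ) : ℝ :=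
  pr μ {ω | F ω = 1 ∧ Y ω = 2} / pr μ {ω | Y ω = 2}

/-- The Correlated Agreement correlation matrix:
`Δ(F,G)(k,l) = ℙ(F=k, G=l) − ℙ(F=k)·ℙ(G=l)`. -/
noncomputable def caDelta {Ω : Type*} [MeasurableSpace Ω] (μ : Measure Ω)
    (F G : Ω → ℕ) (k l : ℕ) : ℝ :=
  pr μ {ω | F ω = k ∧ G ω = l} - pr μ {ω | F ω = k} * pr μ {ω | G ω = l}

/-- The expected Correlated Agreement score of `F` against `G`:
`S̄(F,G) = ℙ(F = G) − ℙ(F=1)ℙ(G=1) − ℙ(F=2)ℙ(G=2)`. -/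
noncomputable def caScore {Ω : Type*} [MeasurableSpace Ω] (μ : Measure Ω)
    (F G : Ω → ℕ) : ℝ :=
  pr μ {ω | F ω = G ω} - pr μ {ω | F ω = 1} * pr μ {ω | G ω = 1}
    - pr μ {ω | F ω = 2} * pr μ {ω | G ω = 2}

/-- `F` and `G` are conditionally independent given `Y`:
`ℙ(F=k, G=l ∣ Y=y) = ℙ(F=k ∣ Y=y)·ℙ(G=l ∣ Y=y)` for all `k,l,y ∈ {1,2}`. -/
def CondIndepGiven {Ω : Type*} [MeasurableSpace Ω] (μ : Measure Ω)
    (F G Y : Ω → ℕ) : Prop :=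
  ∀ k l y : ℕ, k ∈ ({1, 2} : Set ℕ) → l ∈ ({1, 2} : Set ℕ) → y ∈ ({1, 2} : Set ℕ) →
    pr μ {ω | F ω = k ∧ G ω = l ∧ Y ω = y} / pr μ {ω | Y ω = y} =
      (pr μ {ω | F ω = k ∧ Y ω = y} / pr μ {ω | Y ω = y}) *
        (pr μ {ω | G ω = l ∧ Y ω = y} / pr μ {ω | Y ω = y})

lemma pr_split {Ω : Type*} [MeasurableSpace Ω] (μ : Measure Ω) [IsProbabilityMeasure μ]
    {s t u : Set Ω} (ht : MeasurableSet t) (hd : Disjoint s t) (h : s ∪ t = u) :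
    pr μ u = pr μ s + pr μ t := by
  unfold pr
  rw [← h, measure_union hd ht,
    ENNReal.toReal_add (measure_ne_top μ s) (measure_ne_top μ t)]

/-- if `F_i` and `F_j` are conditionally independent given `Y`, and both
are informative (`FNR + FPR < 1`), then `Sgn(Δ(F_i,F_j))` is the 2×2 identity matrix. -/
theorem sgn_delta_identity_between_peers
    {Ω : Type*} [MeasurableSpace Ω] (μ : Measure Ω) [IsProbabilityMeasure μ]
    (Fi Fj Y : Ω → ℕ)
    (hFimeas : Measurable Fi) (hFjmeas : Measurable Fj) (hYmeas : Measurable Y)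
    (hFibin : IsBinaryLabel Fi) (hFjbin : IsBinaryLabel Fj) (hYbin : IsBinaryLabel Y)
    (hY1pos : 0 < pr μ {ω | Y ω = 1}) (hY1lt : pr μ {ω | Y ω = 1} < 1)
    (hci : CondIndepGiven μ Fi Fj Y)
    (hinfi : fnr μ Fi Y + fpr μ Fi Y < 1)
    (hinfj : fnr μ Fj Y + fpr μ Fj Y < 1) :
    0 < caDelta μ Fi Fj 1 1 ∧ 0 < caDelta μ Fi Fj 2 2 ∧
      caDelta μ Fi Fj 1 2 < 0 ∧ caDelta μ Fi Fj 2 1 < 0 := by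
  have h1m : (1:ℕ) ∈ ({1,2} : Set ℕ) := by norm_num
  have h2m : (2:ℕ) ∈ ({1,2} : Set ℕ) := by norm_num
  -- measurability
  have mY : ∀ y : ℕ, MeasurableSet {ω | Y ω = y} := fun y =>
    hYmeas (MeasurableSet.singleton y)
  have mFiY : ∀ k y : ℕ, MeasurableSet {ω | Fi ω = k ∧ Y ω = y} := fun k y =>
    (hFimeas (MeasurableSet.singleton k)).inter (hYmeas (MeasurableSet.singleton y))
  have mFjY : ∀ l y : ℕ, MeasurableSet {ω | Fj ω = l ∧ Y ω = y} := fun l y =>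
    (hFjmeas (MeasurableSet.singleton l)).inter (hYmeas (MeasurableSet.singleton y))
  have mT : ∀ k l y : ℕ, MeasurableSet {ω | Fi ω = k ∧ Fj ω = l ∧ Y ω = y} := fun k l y =>
    (hFimeas (MeasurableSet.singleton k)).inter
      ((hFjmeas (MeasurableSet.singleton l)).inter (hYmeas (MeasurableSet.singleton y)))
  -- p + q = 1
  have hpq : pr μ {ω | Y ω = 1} + pr μ {ω | Y ω = 2} = 1 := by
    have h := pr_split μ (s := {ω | Y ω = 1}) (u := Set.univ) (mY 2)
      (Set.disjoint_left.mpr (by rintro ω h1 h2; simp only [Set.mem_setOf_eq] at h1 h2; omega))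
      (by ext ω; simp only [Set.mem_union, Set.mem_setOf_eq, Set.mem_univ, iff_true]
          exact hYbin ω)
    have hu : pr μ (Set.univ : Set Ω) = 1 := by unfold pr; simp
    rw [hu] at h
    linarith
  have hq : 0 < pr μ {ω | Y ω = 2} := by linarith
  -- splits over Y
  have hsF : ∀ k : ℕ, pr μ {ω | Fi ω = k} =
      pr μ {ω | Fi ω = k ∧ Y ω = 1} + pr μ {ω | Fi ω = k ∧ Y ω = 2} := by
    intro k
    exact pr_split μ (mFiY k 2)
      (Set.disjoint_left.mpr (by rintro ω ⟨_, h1⟩ ⟨_, h2⟩; omega))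
      (by ext ω
          constructor
          · rintro (⟨h, _⟩ | ⟨h, _⟩) <;> exact h
          · intro h
            rcases hYbin ω with hy | hy
            · exact Or.inl ⟨h, hy⟩
            · exact Or.inr ⟨h, hy⟩)
  have hsG : ∀ l : ℕ, pr μ {ω | Fj ω = l} =
      pr μ {ω | Fj ω = l ∧ Y ω = 1} + pr μ {ω | Fj ω = l ∧ Y ω = 2} := by
    intro l
    exact pr_split μ (mFjY l 2)
      (Set.disjoint_left.mpr (by rintro ω ⟨_, h1⟩ ⟨_, h2⟩; omega))
      (by ext ω
          constructor
          · rintro (⟨h, _⟩ | ⟨h, _⟩) <;> exact h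
          · intro h
            rcases hYbin ω with hy | hy
            · exact Or.inl ⟨h, hy⟩
            · exact Or.inr ⟨h, hy⟩)
  have hsS : ∀ k l : ℕ, pr μ {ω | Fi ω = k ∧ Fj ω = l} =
      pr μ {ω | Fi ω = k ∧ Fj ω = l ∧ Y ω = 1} +
        pr μ {ω | Fi ω = k ∧ Fj ω = l ∧ Y ω = 2} := by
    intro k l
    exact pr_split μ (mT k l 2)
      (Set.disjoint_left.mpr (by rintro ω ⟨_, _, h1⟩ ⟨_, _, h2⟩; omega))
      (by ext ω
          constructor
          · rintro (⟨h, h', _⟩ | ⟨h, h', _⟩) <;> exact ⟨h, h'⟩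
          · rintro ⟨h, h'⟩
            rcases hYbin ω with hy | hy
            · exact Or.inl ⟨h, h', hy⟩
            · exact Or.inr ⟨h, h', hy⟩)
  -- partitions of {Y = y} by Fi and Fj
  have hPF : ∀ y : ℕ, pr μ {ω | Fi ω = 1 ∧ Y ω = y} + pr μ {ω | Fi ω = 2 ∧ Y ω = y} =
      pr μ {ω | Y ω = y} := by
    intro y
    exact (pr_split μ (mFiY 2 y)
      (Set.disjoint_left.mpr (by rintro ω ⟨h1, _⟩ ⟨h2, _⟩; omega))
      (by ext ω
          constructor
          · rintro (⟨_, h⟩ | ⟨_, h⟩) <;> exact h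
          · intro h
            rcases hFibin ω with hf | hf
            · exact Or.inl ⟨hf, h⟩
            · exact Or.inr ⟨hf, h⟩)).symm
  have hPG : ∀ y : ℕ, pr μ {ω | Fj ω = 1 ∧ Y ω = y} + pr μ {ω | Fj ω = 2 ∧ Y ω = y} =
      pr μ {ω | Y ω = y} := by
    intro y
    exact (pr_split μ (mFjY 2 y)
      (Set.disjoint_left.mpr (by rintro ω ⟨h1, _⟩ ⟨h2, _⟩; omega))
      (by ext ω
          constructor
          · rintro (⟨_, h⟩ | ⟨_, h⟩) <;> exact h
          · intro h
            rcases hFjbin ω with hf | hf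
            · exact Or.inl ⟨hf, h⟩
            · exact Or.inr ⟨hf, h⟩)).symm
  -- conditional independence, cleared of denominators
  have hT : ∀ k l y : ℕ, k ∈ ({1,2} : Set ℕ) → l ∈ ({1,2} : Set ℕ) →
      y ∈ ({1,2} : Set ℕ) → 0 < pr μ {ω | Y ω = y} →
      pr μ {ω | Fi ω = k ∧ Fj ω = l ∧ Y ω = y} * pr μ {ω | Y ω = y} =
        pr μ {ω | Fi ω = k ∧ Y ω = y} * pr μ {ω | Fj ω = l ∧ Y ω = y} := by
    intro k l y hk hl hy hpos
    have h := hci k l y hk hl hy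
    field_simp at h
    have h' : (pr μ {ω | Fi ω = k ∧ Fj ω = l ∧ Y ω = y} * pr μ {ω | Y ω = y} -
        pr μ {ω | Fi ω = k ∧ Y ω = y} * pr μ {ω | Fj ω = l ∧ Y ω = y}) *
        pr μ {ω | Y ω = y} = 0 := by linear_combination (pr μ {ω | Y ω = y}) * h
    rcases mul_eq_zero.mp h' with h'' | h''
    · linarith
    · exact absurd h'' (ne_of_gt hpos)
  -- the key factorization
  have key : ∀ k l : ℕ, k ∈ ({1,2} : Set ℕ) → l ∈ ({1,2} : Set ℕ) →
      caDelta μ Fi Fj k l * (pr μ {ω | Y ω = 1} * pr μ {ω | Y ω = 2}) =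
        (pr μ {ω | Y ω = 2} * pr μ {ω | Fi ω = k ∧ Y ω = 1} -
          pr μ {ω | Y ω = 1} * pr μ {ω | Fi ω = k ∧ Y ω = 2}) *
        (pr μ {ω | Y ω = 2} * pr μ {ω | Fj ω = l ∧ Y ω = 1} -
          pr μ {ω | Y ω = 1} * pr μ {ω | Fj ω = l ∧ Y ω = 2}) := by
    intro k l hk hl
    have h1 := hT k l 1 hk hl h1m hY1pos
    have h2 := hT k l 2 hk hl h2m hq
    have hS := hsS k l
    have hFk := hsF k
    have hGl := hsG l
    unfold caDelta
    linear_combination (pr μ {ω | Y ω = 1} * pr μ {ω | Y ω = 2}) * hS +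
      pr μ {ω | Y ω = 2} * h1 + pr μ {ω | Y ω = 1} * h2 -
      (pr μ {ω | Y ω = 1} * pr μ {ω | Y ω = 2}) * (pr μ {ω | Fj ω = l}) * hFk -
      (pr μ {ω | Y ω = 1} * pr μ {ω | Y ω = 2}) *
        (pr μ {ω | Fi ω = k ∧ Y ω = 1} + pr μ {ω | Fi ω = k ∧ Y ω = 2}) * hGl -
      (pr μ {ω | Fi ω = k ∧ Y ω = 1} * pr μ {ω | Fj ω = l ∧ Y ω = 1} * pr μ {ω | Y ω = 2} +
       pr μ {ω | Fi ω = k ∧ Y ω = 2} * pr μ {ω | Fj ω = l ∧ Y ω = 2} * pr μ {ω | Y ω = 1}) * hpq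
  -- informativeness inequalities, cleared of denominators
  have hpq' : 0 < pr μ {ω | Y ω = 1} * pr μ {ω | Y ω = 2} := mul_pos hY1pos hq
  unfold fnr fpr at hinfi hinfj
  rw [div_add_div _ _ (ne_of_gt hY1pos) (ne_of_gt hq), div_lt_one hpq'] at hinfi hinfj
  have hXi1 : 0 < pr μ {ω | Y ω = 2} * pr μ {ω | Fi ω = 1 ∧ Y ω = 1} -
      pr μ {ω | Y ω = 1} * pr μ {ω | Fi ω = 1 ∧ Y ω = 2} := by
    have h1 := hPF 1
    have := congrArg (pr μ {ω | Y ω = 2} * ·) h1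
    simp only [mul_add] at this
    nlinarith [hinfi]
  have hXi2 : pr μ {ω | Y ω = 2} * pr μ {ω | Fi ω = 2 ∧ Y ω = 1} -
      pr μ {ω | Y ω = 1} * pr μ {ω | Fi ω = 2 ∧ Y ω = 2} < 0 := by
    have h2 := hPF 2
    have := congrArg (pr μ {ω | Y ω = 1} * ·) h2
    simp only [mul_add] at this
    nlinarith [hinfi]
  have hXj1 : 0 < pr μ {ω | Y ω = 2} * pr μ {ω | Fj ω = 1 ∧ Y ω = 1} -
      pr μ {ω | Y ω = 1} * pr μ {ω | Fj ω = 1 ∧ Y ω = 2} := by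
    have h1 := hPG 1
    have := congrArg (pr μ {ω | Y ω = 2} * ·) h1
    simp only [mul_add] at this
    nlinarith [hinfj]
  have hXj2 : pr μ {ω | Y ω = 2} * pr μ {ω | Fj ω = 2 ∧ Y ω = 1} -
      pr μ {ω | Y ω = 1} * pr μ {ω | Fj ω = 2 ∧ Y ω = 2} < 0 := by
    have h2 := hPG 2
    have := congrArg (pr μ {ω | Y ω = 1} * ·) h2
    simp only [mul_add] at this
    nlinarith [hinfj]
  refine ⟨?_, ?_, ?_, ?_⟩
  · have h := key 1 1 h1m h1m
    nlinarith [mul_pos hXi1 hXj1, hpq']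
  · have h := key 2 2 h2m h2m
    nlinarith [mul_pos_of_neg_of_neg hXi2 hXj2, hpq']
  · have h := key 1 2 h1m h2m
    nlinarith [mul_neg_of_pos_of_neg hXi1 hXj2, hpq']
  · have h := key 2 1 h2m h1m
    nlinarith [mul_neg_of_neg_of_pos hXi2 hXj1, hpq']
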